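/- Relaxation soundness for the equal-length constraint: let d(t¹), d(t²) ∈ [−B/2, B/2]² satisfy ‖d(t¹)‖² = ‖d(t²)‖². Then there exist SOS2 overestimators X̃, Ỹ of the squares of the coordinates of d(t¹) and d(t²) such that ‖d(t¹)‖² ≤ X̃(t²) + Ỹ(t²) and ‖d(t²)‖² ≤ X̃(t¹) + Ỹ(t¹); i.e., the relaxed constraint set is an outer approximation of the exact feasible set. -/

import Mathlib

/-- `SOS2Rep B S x v` : `v = ∑ λₛ αₛ²` for some SOS2 convex combination `λ`
representing `x` on the uniform grid `αₛ = sB/S − B/2` of `[−B/2, B/2]`. -/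
def SOS2Rep (B : ℝ) (S : ℕ) (x v : ℝ) : Prop :=
  ∃ lam : Fin (S + 1) → ℝ,
    (∀ s, 0 ≤ lam s) ∧ (∑ s, lam s = 1) ∧
    (∑ s, lam s * ((s : ℝ) * B / S - B / 2) = x) ∧
    (∑ s, lam s * ((s : ℝ) * B / S - B / 2) ^ 2 = v) ∧
    (∃ s₀ : ℕ, ∀ s : Fin (S + 1), lam s ≠ 0 → (s : ℕ) = s₀ ∨ (s : ℕ) = s₀ + 1)


lemma two_point_sum {n : ℕ} (i j : Fin n) (hij : i ≠ j) (a b : ℝ) (f : Fin n → ℝ) :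
    ∑ s, ((a * (if s = i then 1 else 0) + b * (if s = j then 1 else 0)) * f s)
      = a * f i + b * f j := by
  simp [add_mul, Finset.sum_add_distrib, ite_mul, Finset.sum_ite_eq']

lemma key (B : ℝ) (hB : 0 < B) (S : ℕ) (hS : 1 ≤ S) (x : ℝ)
    (hx1 : -(B / 2) ≤ x) (hx2 : x ≤ B / 2) :
    ∃ v, SOS2Rep B S x v ∧ x ^ 2 ≤ v := by
  have hS' : (0:ℝ) < S := by exact_mod_cast Nat.pos_of_ne_zero (by omega)
  set h : ℝ := B / S with hh_def
  have hh : 0 < h := div_pos hB hS'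
  set u : ℝ := x + B / 2 with hu_def
  have hu0 : 0 ≤ u := by rw [hu_def]; linarith
  have huB : u ≤ B := by rw [hu_def]; linarith
  set s₀ : ℕ := min (Nat.floor (u / h)) (S - 1) with hs₀_def
  have hs₀S : s₀ + 1 ≤ S := by
    have : s₀ ≤ S - 1 := min_le_right _ _
    omega
  have hlo : (s₀ : ℝ) * h ≤ u := by
    have h1 : (s₀ : ℝ) ≤ Nat.floor (u / h) := by
      exact_mod_cast min_le_left _ _
    have h2 : (Nat.floor (u / h) : ℝ) ≤ u / h := Nat.floor_le (by positivity)
    have := le_trans h1 h2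
    calc (s₀ : ℝ) * h ≤ (u / h) * h := by nlinarith
    _ = u := by field_simp
  have hhi : u ≤ ((s₀ : ℝ) + 1) * h := by
    rcases le_or_gt (Nat.floor (u / h)) (S - 1) with hc | hc
    · have hs : s₀ = Nat.floor (u / h) := min_eq_left hc
      have h2 : u / h < Nat.floor (u / h) + 1 := Nat.lt_floor_add_one _
      have : u / h < (s₀ : ℝ) + 1 := by rw [hs]; exact_mod_cast h2
      calc u = (u / h) * h := by field_simp
      _ ≤ ((s₀ : ℝ) + 1) * h := by nlinarith [(div_nonneg hu0 hh.le)]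
    · have hs : s₀ = S - 1 := min_eq_right (by omega)
      have : ((s₀ : ℝ) + 1) = (S : ℝ) := by
        rw [hs]; push_cast [Nat.cast_sub hS]; ring
      rw [this]
      have : (S : ℝ) * h = B := by rw [hh_def, mul_comm, div_mul_cancel₀ _ hS'.ne']
      linarith [this]
  rw [hu_def] at hlo hhi
  -- grid points
  set αi : ℝ := (s₀ : ℝ) * h - B / 2 with hai
  set αj : ℝ := ((s₀ : ℝ) + 1) * h - B / 2 with haj
  set t : ℝ := (x - αi) / h with ht_def
  have ht0 : 0 ≤ t := by
    apply div_nonneg _ hh.le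
    simp only [hai]; linarith [hlo]
  have ht1 : t ≤ 1 := by
    rw [div_le_one hh]
    simp only [hai]
    linarith [hhi]
  have hxt : (1 - t) * αi + t * αj = x := by
    have : t * h = x - αi := by rw [ht_def, div_mul_cancel₀ _ hh.ne']
    have hji : αj - αi = h := by simp [hai, haj]; ring
    nlinarith [this, hji]
  set i : Fin (S + 1) := ⟨s₀, by omega⟩ with hi_def
  set j : Fin (S + 1) := ⟨s₀ + 1, by omega⟩ with hj_def
  have hij : i ≠ j := by
    simp [hi_def, hj_def, Fin.ext_iff]
  set lam : Fin (S + 1) → ℝ :=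
    fun s => (1 - t) * (if s = i then 1 else 0) + t * (if s = j then 1 else 0) with hlam
  have hgrid : ∀ s : Fin (S + 1), (s : ℝ) * B / S - B / 2 = (s : ℝ) * h - B / 2 := by
    intro s; rw [hh_def]; ring
  have hαi : ((i : ℕ) : ℝ) * B / S - B / 2 = αi := by
    rw [hgrid]
  have hαj : ((j : ℕ) : ℝ) * B / S - B / 2 = αj := by
    rw [hgrid]
    show ((s₀ + 1 : ℕ) : ℝ) * h - B / 2 = αj
    rw [haj]; push_cast; ring
  refine ⟨(1 - t) * αi ^ 2 + t * αj ^ 2, ⟨lam, ?_, ?_, ?_, ?_, ?_⟩, ?_⟩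
  · intro s
    simp only [hlam]
    have : (0:ℝ) ≤ 1 - t := by linarith
    positivity
  · have h1 := two_point_sum i j hij (1 - t) t (fun _ => (1:ℝ))
    simp only [mul_one] at h1
    simp only [hlam]
    rw [h1]; ring
  · have := two_point_sum i j hij (1 - t) t (fun s => (s : ℝ) * B / S - B / 2)
    simp only [hlam]
    rw [this, hαi, hαj, hxt]
  · have := two_point_sum i j hij (1 - t) t (fun s => ((s : ℝ) * B / S - B / 2) ^ 2)
    simp only [hlam]
    rw [this, hαi, hαj]
  · refine ⟨s₀, fun s hs => ?_⟩
    by_contra hcon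
    push_neg at hcon
    apply hs
    simp only [hlam]
    have h1 : s ≠ i := by
      intro he; apply hcon.1; rw [he]
    have h2 : s ≠ j := by
      intro he; apply hcon.2; rw [he]
    simp [h1, h2]
  · nlinarith [sq_nonneg (αj - αi), mul_nonneg ht0 (by linarith : (0:ℝ) ≤ 1 - t), hxt]

/-- Relaxation soundness: any pair of points of the box with equal squared norms admits
SOS2 overestimators of the squared coordinates satisfying the relaxed equal-length
constraints. -/
theorem stmt_9 (B : ℝ) (hB : 0 < B) (S : ℕ) (hS : 1 ≤ S)
    (X₁ Y₁ X₂ Y₂ : ℝ)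
    (hX₁ : -(B / 2) ≤ X₁ ∧ X₁ ≤ B / 2) (hY₁ : -(B / 2) ≤ Y₁ ∧ Y₁ ≤ B / 2)
    (hX₂ : -(B / 2) ≤ X₂ ∧ X₂ ≤ B / 2) (hY₂ : -(B / 2) ≤ Y₂ ∧ Y₂ ≤ B / 2)
    (heq : X₁ ^ 2 + Y₁ ^ 2 = X₂ ^ 2 + Y₂ ^ 2) :
    ∃ Xt₁ Yt₁ Xt₂ Yt₂ : ℝ,
      SOS2Rep B S X₁ Xt₁ ∧ SOS2Rep B S Y₁ Yt₁ ∧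
      SOS2Rep B S X₂ Xt₂ ∧ SOS2Rep B S Y₂ Yt₂ ∧
      X₁ ^ 2 + Y₁ ^ 2 ≤ Xt₂ + Yt₂ ∧
      X₂ ^ 2 + Y₂ ^ 2 ≤ Xt₁ + Yt₁ := by
  obtain ⟨v1, r1, b1⟩ := key B hB S hS X₁ hX₁.1 hX₁.2
  obtain ⟨w1, q1, c1⟩ := key B hB S hS Y₁ hY₁.1 hY₁.2
  obtain ⟨v2, r2, b2⟩ := key B hB S hS X₂ hX₂.1 hX₂.2
  obtain ⟨w2, q2, c2⟩ := key B hB S hS Y₂ hY₂.1 hY₂.2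
  exact ⟨v1, w1, v2, w2, r1, q1, r2, q2, by linarith, by linarith⟩
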